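/- Let 1 < q < ∞, v ∈ ℝⁿ and 0 < λ < ‖v‖_{q̄}, and let x* = π_q(v) be the minimizer of g(x) = (1/2)‖x − v‖₂² + λ‖x‖_q. Then sgn(x*ᵢ) = sgn(vᵢ) for all i; 0 < |x*ᵢ| < |vᵢ| for every i with vᵢ ≠ 0 (in particular x*ᵢ = 0 whenever vᵢ = 0); and π_q(v) = sgn(v) ⊙ π_q(|v|), where ⊙, sgn and |·| act componentwise. -/

import Mathlib

open scoped BigOperators

/-- The vector ℓq norm for a real exponent `q`. -/
noncomputable def lqNormR {n : ℕ} (q : ℝ) (x : Fin n → ℝ) : ℝ :=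
  (∑ i, |x i| ^ q) ^ (1 / q)

/-- The objective `g(x) = (1/2)‖x − v‖₂² + λ‖x‖_q`. -/
noncomputable def gObjR {n : ℕ} (q : ℝ) (lam : ℝ) (v x : Fin n → ℝ) : ℝ :=
  (1 / 2) * ∑ i, (x i - v i) ^ 2 + lam * lqNormR q x

section helpers

variable {n : ℕ}

lemma lq_sum_nonneg (q : ℝ) (x : Fin n → ℝ) : 0 ≤ ∑ i, |x i| ^ q :=
  Finset.sum_nonneg fun i _ => Real.rpow_nonneg (abs_nonneg _) q

lemma lq_nonneg (q : ℝ) (x : Fin n → ℝ) : 0 ≤ lqNormR q x :=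
  Real.rpow_nonneg (lq_sum_nonneg q x) _

lemma lq_mono {q : ℝ} (hq : 0 < q) {a b : Fin n → ℝ} (h : ∀ i, |a i| ≤ |b i|) :
    lqNormR q a ≤ lqNormR q b :=
  Real.rpow_le_rpow (lq_sum_nonneg q a)
    (Finset.sum_le_sum fun i _ => Real.rpow_le_rpow (abs_nonneg _) (h i) hq.le)
    (by positivity)

lemma lq_smul {q : ℝ} (hq : 0 < q) {c : ℝ} (hc : 0 ≤ c) (x : Fin n → ℝ) :
    lqNormR q (fun i => c * x i) = c * lqNormR q x := by
  unfold lqNormR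
  have h1 : ∀ i, |c * x i| ^ q = c ^ q * |x i| ^ q := fun i => by
    rw [abs_mul, abs_of_nonneg hc, Real.mul_rpow hc (abs_nonneg _)]
  simp_rw [h1, ← Finset.mul_sum]
  rw [Real.mul_rpow (by positivity) (lq_sum_nonneg q x), ← Real.rpow_mul hc,
    mul_one_div, div_self hq.ne', Real.rpow_one]

lemma lq_add_le {q : ℝ} (hq : 1 ≤ q) (a b : Fin n → ℝ) :
    lqNormR q (fun i => a i + b i) ≤ lqNormR q a + lqNormR q b := by
  unfold lqNormR
  exact Real.Lp_add_le Finset.univ a b hq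

/-- Uniqueness of the minimizer of `gObjR`. -/
lemma g_min_unique {q lam : ℝ} (hq : 1 < q) (hlam : 0 ≤ lam) (v x y : Fin n → ℝ)
    (hx : ∀ z, gObjR q lam v x ≤ gObjR q lam v z)
    (hy : ∀ z, gObjR q lam v y ≤ gObjR q lam v z) : x = y := by
  by_contra hne
  have hxy : gObjR q lam v x = gObjR q lam v y := le_antisymm (hx y) (hy x)
  obtain ⟨i, hi⟩ : ∃ i, x i ≠ y i := by
    by_contra h; push_neg at h; exact hne (funext h)
  set z : Fin n → ℝ := fun i => (x i + y i) / 2 with hz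
  have hquad : ∑ j, (z j - v j) ^ 2 <
      ((∑ j, (x j - v j) ^ 2) + ∑ j, (y j - v j) ^ 2) / 2 := by
    have := Finset.sum_lt_sum (s := Finset.univ)
      (f := fun j => (z j - v j) ^ 2)
      (g := fun j => ((x j - v j) ^ 2 + (y j - v j) ^ 2) / 2)
      (fun j _ => by simp only [hz]; nlinarith [sq_nonneg (x j - y j)])
      ⟨i, Finset.mem_univ i, by
        simp only [hz]; nlinarith [sq_pos_of_ne_zero (sub_ne_zero.2 hi)]⟩
    calc ∑ j, (z j - v j) ^ 2 < ∑ j, ((x j - v j) ^ 2 + (y j - v j) ^ 2) / 2 := this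
      _ = ((∑ j, (x j - v j) ^ 2) + ∑ j, (y j - v j) ^ 2) / 2 := by
          rw [← Finset.sum_div, Finset.sum_add_distrib]
  have hnorm : lqNormR q z ≤ (lqNormR q x + lqNormR q y) / 2 := by
    have h1 : z = fun i => (1/2 : ℝ) * x i + (1/2 : ℝ) * y i := by
      funext i; simp [hz]; ring
    rw [h1]
    calc lqNormR q (fun i => (1/2 : ℝ) * x i + (1/2 : ℝ) * y i)
        ≤ lqNormR q (fun i => (1/2 : ℝ) * x i) + lqNormR q (fun i => (1/2 : ℝ) * y i) :=
          lq_add_le hq.le _ _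
      _ = (lqNormR q x + lqNormR q y) / 2 := by
          rw [lq_smul (by linarith) (by norm_num), lq_smul (by linarith) (by norm_num)]; ring
  have hlt : gObjR q lam v z < gObjR q lam v x := by
    unfold gObjR
    have h2 : lam * lqNormR q z ≤ lam * ((lqNormR q x + lqNormR q y) / 2) :=
      mul_le_mul_of_nonneg_left hnorm hlam
    have := hxy; unfold gObjR at this
    nlinarith
  exact absurd (hx z) (not_le.2 hlt)

lemma sign_mul_self_eq_abs (t : ℝ) : Real.sign t * t = |t| := by
  rcases lt_trichotomy t 0 with h | h | h
  · rw [Real.sign_of_neg h, abs_of_neg h]; ring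
  · simp [h]
  · rw [Real.sign_of_pos h, abs_of_pos h]; ring

/-- A minimizer of `gObjR` is nonzero when `0 < λ < ‖v‖_{q̄}`. -/
lemma min_sum_pos {q lam : ℝ} (hq : 1 < q) (hlam : 0 < lam) (v x : Fin n → ℝ)
    (hlam' : lam < lqNormR (q / (q - 1)) v)
    (hx : ∀ y, gObjR q lam v x ≤ gObjR q lam v y) :
    0 < ∑ j, |x j| ^ q := by
  have hq0 : (0:ℝ) < q := by linarith
  by_contra hcon
  have hsum0 : ∑ j, |x j| ^ q = 0 :=
    le_antisymm (not_lt.1 hcon) (lq_sum_nonneg q x)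
  have hx0 : ∀ j, x j = 0 := by
    intro j
    have h1 := (Finset.sum_eq_zero_iff_of_nonneg
      (fun i _ => Real.rpow_nonneg (abs_nonneg (x i)) q)).1 hsum0 j (Finset.mem_univ j)
    by_contra hj
    rw [Real.rpow_eq_zero (abs_nonneg _) hq0.ne'] at h1
    exact hj (abs_eq_zero.1 h1)
  set p := q / (q - 1) with hp_def
  have hq1 : (0:ℝ) < q - 1 := by linarith
  have hp : 1 < p := (one_lt_div hq1).2 (by linarith)
  have hp0 : (0:ℝ) < p := by linarith
  set S := ∑ i, |v i| ^ p with hS_def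
  have hS0 : 0 ≤ S := Finset.sum_nonneg fun i _ => Real.rpow_nonneg (abs_nonneg _) p
  have hSpos : 0 < S := by
    rcases hS0.lt_or_eq with h | h
    · exact h
    · exfalso
      have : lqNormR p v = 0 := by
        rw [lqNormR, ← hS_def, ← h, Real.zero_rpow (by positivity : (1:ℝ)/p ≠ 0)]
      rw [this] at hlam'; linarith
  set d : Fin n → ℝ := fun i => Real.sign (v i) * |v i| ^ (p - 1) with hd_def
  have f1 : ∀ i, d i * v i = |v i| ^ p := by
    intro i
    rcases eq_or_ne (v i) 0 with h | h
    · simp [hd_def, h, Real.zero_rpow hp0.ne']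
    · have : d i * v i = |v i| ^ (p - 1) * (Real.sign (v i) * v i) := by rw [hd_def]; ring
      rw [this, sign_mul_self_eq_abs, ← Real.rpow_add_one (abs_ne_zero.2 h)]
      congr 1
      ring
  have hpq : (p - 1) * q = p := by rw [hp_def]; field_simp; ring
  have f2 : ∀ i, |d i| ^ q = |v i| ^ p := by
    intro i
    rcases eq_or_ne (v i) 0 with h | h
    · simp [hd_def, h, Real.zero_rpow hp0.ne', Real.zero_rpow hq0.ne']
    · have hsabs : |Real.sign (v i)| = 1 := by
        rcases h.lt_or_gt with h' | h'
        · rw [Real.sign_of_neg h']; norm_num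
        · rw [Real.sign_of_pos h']; norm_num
      rw [hd_def]
      simp only [abs_mul, hsabs, one_mul,
        abs_of_nonneg (Real.rpow_nonneg (abs_nonneg (v i)) (p-1))]
      rw [← Real.rpow_mul (abs_nonneg _), hpq]
  have hdq : lqNormR q d = S ^ (1/q) := by
    rw [lqNormR]
    congr 1
    exact Finset.sum_congr rfl fun i _ => f2 i
  have hSq : 0 < S ^ ((1:ℝ)/q) := Real.rpow_pos_of_pos hSpos _
  have hkey : lam * S ^ ((1:ℝ)/q) < S := by
    have h1 : lqNormR p v = S ^ ((1:ℝ)/p) := rfl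
    have h2 : lam * S ^ ((1:ℝ)/q) < S ^ ((1:ℝ)/p) * S ^ ((1:ℝ)/q) := by
      rw [h1] at hlam'
      exact mul_lt_mul_of_pos_right hlam' hSq
    have h3 : S ^ ((1:ℝ)/p) * S ^ ((1:ℝ)/q) = S := by
      rw [← Real.rpow_add hSpos]
      have : (1:ℝ)/p + 1/q = 1 := by rw [hp_def]; field_simp; ring
      rw [this, Real.rpow_one]
    linarith
  set D2 := ∑ i, d i ^ 2 with hD2_def
  have hD2 : 0 ≤ D2 := Finset.sum_nonneg fun i _ => sq_nonneg _
  set ε := S - lam * S ^ ((1:ℝ)/q) with hε_def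
  have hε : 0 < ε := by rw [hε_def]; linarith
  set t := min 1 (ε / (D2 + 1)) with ht_def
  have ht0 : 0 < t := lt_min one_pos (by positivity)
  have ht1 : t * (D2 + 1) ≤ ε := by
    calc t * (D2 + 1) ≤ ε / (D2 + 1) * (D2 + 1) :=
          mul_le_mul_of_nonneg_right (min_le_right _ _) (by linarith)
      _ = ε := by field_simp
  have hyval : gObjR q lam v (fun i => t * d i) =
      (1/2) * (t^2 * D2 - 2*t*S + ∑ i, (v i)^2) + lam * (t * S ^ ((1:ℝ)/q)) := by
    rw [gObjR]
    have hsm : lqNormR q (fun i => t * d i) = t * lqNormR q d := lq_smul hq0 ht0.le d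
    rw [hsm, hdq]
    congr 1
    congr 1
    have key : ∀ i, (t * d i - v i)^2 = t^2 * d i^2 - 2*t*(|v i| ^ p) + (v i)^2 := by
      intro i; rw [← f1 i]; ring
    simp_rw [key]
    rw [Finset.sum_add_distrib, Finset.sum_sub_distrib, ← Finset.mul_sum, ← Finset.mul_sum,
      ← hS_def, ← hD2_def]
  have hxval : gObjR q lam v x = (1/2) * ∑ i, (v i)^2 := by
    rw [gObjR, lqNormR]
    have h1 : ∀ i, (x i - v i)^2 = (v i)^2 := fun i => by rw [hx0 i]; ring
    have h2 : ∀ i, |x i| ^ q = 0 := fun i => by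
      rw [hx0 i, abs_zero, Real.zero_rpow hq0.ne']
    simp_rw [h1, h2]
    rw [Finset.sum_const_zero, Real.zero_rpow (by positivity : (1:ℝ)/q ≠ 0)]
    ring
  have := hx (fun i => t * d i)
  rw [hxval, hyval] at this
  clear_value t
  clear_value ε
  clear_value D2
  clear_value S
  have h5 : t^2 * D2 ≤ t * ε - t^2 := by nlinarith [mul_le_mul_of_nonneg_left ht1 ht0.le]
  have h6 : t * ε = t * S - lam * (t * S ^ ((1:ℝ)/q)) := by rw [hε_def]; ring
  nlinarith [h5, h6, mul_pos ht0 hε, sq_nonneg t]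

lemma myHasDerivAt_abs_rpow {q : ℝ} (hq : 1 < q) (t : ℝ) :
    HasDerivAt (fun s : ℝ => |s| ^ q) (Real.sign t * (q * |t| ^ (q - 1))) t := by
  have h := hasDerivAt_abs_rpow t hq
  convert h using 1
  rcases lt_trichotomy t 0 with h0 | h0 | h0
  · rw [Real.sign_of_neg h0, abs_of_neg h0]
    have : (-t) ^ (q - 1) = (-t) ^ (q - 2) * (-t) := by
      rw [← Real.rpow_add_one (by linarith : (-t) ≠ 0)]; ring_nf
    rw [this]; ring
  · subst h0; simp
  · rw [Real.sign_of_pos h0, abs_of_pos h0]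
    have : t ^ (q - 1) = t ^ (q - 2) * t := by
      rw [← Real.rpow_add_one h0.ne']; ring_nf
    rw [this]; ring

/-- First-order optimality conditions for a nonzero minimizer of `gObjR`. -/
lemma min_foc {q lam : ℝ} (hq : 1 < q) (v x : Fin n → ℝ)
    (hN : 0 < ∑ j, |x j| ^ q)
    (hx : ∀ y, gObjR q lam v x ≤ gObjR q lam v y) (i : Fin n) :
    v i = x i + lam * (∑ j, |x j| ^ q) ^ ((1:ℝ)/q - 1) *
      (Real.sign (x i) * |x i| ^ (q - 1)) := by
  have hq0 : (0:ℝ) < q := by linarith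
  classical
  set A := ∑ j ∈ Finset.univ.erase i, |x j| ^ q with hA_def
  set C := ∑ j ∈ Finset.univ.erase i, (x j - v j) ^ 2 with hC_def
  have hsplit : ∀ f : Fin n → ℝ, ∑ j, f j = f i + ∑ j ∈ Finset.univ.erase i, f j :=
    fun f => (Finset.add_sum_erase _ f (Finset.mem_univ i)).symm
  set h : ℝ → ℝ := fun t => (1/2) * ((t - v i)^2 + C) + lam * ((|t|^q + A) ^ ((1:ℝ)/q))
    with hh_def
  have heq : ∀ t, gObjR q lam v (Function.update x i t) = h t := by
    intro t
    rw [gObjR, lqNormR, hh_def]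
    have e1 : ∑ j, (Function.update x i t j - v j) ^ 2 = (t - v i)^2 + C := by
      rw [hsplit (fun j => (Function.update x i t j - v j) ^ 2), Function.update_self, hC_def]
      congr 1
      exact Finset.sum_congr rfl fun j hj =>
        by rw [Function.update_of_ne (Finset.ne_of_mem_erase hj)]
    have e2 : ∑ j, |Function.update x i t j| ^ q = |t|^q + A := by
      rw [hsplit (fun j => |Function.update x i t j| ^ q), Function.update_self, hA_def]
      congr 1
      exact Finset.sum_congr rfl fun j hj =>
        by rw [Function.update_of_ne (Finset.ne_of_mem_erase hj)]
    rw [e1, e2]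
  have hmin : ∀ t, h (x i) ≤ h t := by
    intro t
    rw [← heq t, ← heq (x i), Function.update_eq_self]
    exact hx _
  have hlocal : IsLocalMin h (x i) := Filter.Eventually.of_forall hmin
  have hNA : (0:ℝ) < |x i|^q + A := by
    rw [hA_def, ← hsplit (fun j => |x j| ^ q)]; exact hN
  have part1 : HasDerivAt (fun t : ℝ => (1/2) * ((t - v i)^2 + C)) (x i - v i) (x i) := by
    have : HasDerivAt (fun t : ℝ => t - v i) 1 (x i) := (hasDerivAt_id _).sub_const _
    have h2 := ((this.pow 2).add_const C).const_mul (1/2 : ℝ)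
    exact h2.congr_deriv (by norm_num; ring)
  have part2 : HasDerivAt (fun t : ℝ => |t|^q + A)
      (Real.sign (x i) * (q * |x i| ^ (q - 1))) (x i) :=
    (myHasDerivAt_abs_rpow hq (x i)).add_const A
  have outer : HasDerivAt (fun u : ℝ => u ^ ((1:ℝ)/q))
      ((1/q) * (|x i|^q + A) ^ ((1:ℝ)/q - 1)) (|x i|^q + A) :=
    Real.hasDerivAt_rpow_const (Or.inl hNA.ne')
  have hderiv : HasDerivAt h
      ((x i - v i) + lam * ((1/q) * (|x i|^q + A) ^ ((1:ℝ)/q - 1) *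
        (Real.sign (x i) * (q * |x i| ^ (q - 1))))) (x i) := by
    rw [hh_def]
    have hc := ((outer.comp (x i) part2)).const_mul lam
    exact part1.add hc
  have hzero := hlocal.hasDerivAt_eq_zero hderiv
  have hNrw : (∑ j, |x j| ^ q) = |x i|^q + A := by
    rw [hA_def, ← hsplit (fun j => |x j| ^ q)]
  rw [hNrw]
  have hq' : (1:ℝ)/q * q = 1 := by field_simp
  linear_combination (-1) * hzero + (lam * ((|x i|^q + A) ^ ((1:ℝ)/q - 1)) *
    (Real.sign (x i) * |x i| ^ (q-1))) * hq'

/-- Trichotomy for a minimizer: each coordinate is pinched strictly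
between `0` and `v i` (or both are zero). -/
lemma min_key {q lam : ℝ} (hq : 1 < q) (hlam : 0 < lam) (v x : Fin n → ℝ)
    (hlam' : lam < lqNormR (q / (q - 1)) v)
    (hx : ∀ y, gObjR q lam v x ≤ gObjR q lam v y) (i : Fin n) :
    (x i = 0 ∧ v i = 0) ∨ (0 < x i ∧ x i < v i) ∨ (v i < x i ∧ x i < 0) := by
  have hN := min_sum_pos hq hlam v x hlam' hx
  set K := lam * (∑ j, |x j| ^ q) ^ ((1:ℝ)/q - 1) with hK_def
  have hK : 0 < K := mul_pos hlam (Real.rpow_pos_of_pos hN _)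
  have foc := min_foc hq v x hN hx i
  rcases lt_trichotomy (x i) 0 with h | h | h
  · right; right
    have habs : 0 < |x i| ^ (q-1) := Real.rpow_pos_of_pos (abs_pos.2 h.ne) _
    rw [Real.sign_of_neg h] at foc
    constructor <;> nlinarith [mul_pos hK habs]
  · left
    refine ⟨h, ?_⟩
    rw [foc, h]
    simp
  · right; left
    have habs : 0 < |x i| ^ (q-1) := Real.rpow_pos_of_pos (abs_pos.2 h.ne') _
    rw [Real.sign_of_pos h] at foc
    constructor <;> nlinarith [mul_pos hK habs]

end helpers

/-- Let `1 < q < ∞`, `v ∈ ℝⁿ`, `0 < λ < ‖v‖_{q̄}` (`q̄ = q/(q−1)`), and let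
`x* = π_q(v)` be the minimizer of `g`.  Then `sgn(x*ᵢ) = sgn(vᵢ)` for all `i`;
`0 < |x*ᵢ| < |vᵢ|` whenever `vᵢ ≠ 0`; `x*ᵢ = 0` whenever `vᵢ = 0`; and
`π_q(v) = sgn(v) ⊙ π_q(|v|)` (componentwise). -/
theorem stmt3 {n : ℕ} (q : ℝ) (hq : 1 < q) (v : Fin n → ℝ) (lam : ℝ)
    (hlam : 0 < lam) (hlam' : lam < lqNormR (q / (q - 1)) v)
    (x : Fin n → ℝ) (hx : ∀ y : Fin n → ℝ, gObjR q lam v x ≤ gObjR q lam v y) :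
    (∀ i, Real.sign (x i) = Real.sign (v i)) ∧
    (∀ i, v i ≠ 0 → 0 < |x i| ∧ |x i| < |v i|) ∧
    (∀ i, v i = 0 → x i = 0) ∧
    (∀ y : Fin n → ℝ,
      (∀ z : Fin n → ℝ,
          gObjR q lam (fun i => |v i|) y ≤ gObjR q lam (fun i => |v i|) z) →
        x = fun i => Real.sign (v i) * y i) := by
  have hq0 : (0:ℝ) < q := by linarith
  have key := min_key hq hlam v x hlam' hx
  refine ⟨?_, ?_, ?_, ?_⟩
  · intro i
    rcases key i with ⟨h1, h2⟩ | ⟨h1, h2⟩ | ⟨h1, h2⟩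
    · rw [h1, h2]
    · rw [Real.sign_of_pos h1, Real.sign_of_pos (by linarith)]
    · rw [Real.sign_of_neg h2, Real.sign_of_neg (by linarith)]
  · intro i hvi
    rcases key i with ⟨h1, h2⟩ | ⟨h1, h2⟩ | ⟨h1, h2⟩
    · exact absurd h2 hvi
    · exact ⟨abs_pos.2 h1.ne', by
        rw [abs_of_pos h1, abs_of_pos (by linarith)]; exact h2⟩
    · exact ⟨abs_pos.2 h2.ne, by
        rw [abs_of_neg h2, abs_of_neg (by linarith)]; linarith⟩
  · intro i hvi
    rcases key i with ⟨h1, _⟩ | ⟨h1, h2⟩ | ⟨h1, h2⟩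
    · exact h1
    · exact absurd hvi (h1.trans h2).ne'
    · exact absurd hvi (h1.trans h2).ne
  · intro y hy
    have hlam'' : lam < lqNormR (q / (q - 1)) (fun i => |v i|) := by
      have : lqNormR (q / (q - 1)) (fun i => |v i|) = lqNormR (q / (q - 1)) v := by
        rw [lqNormR, lqNormR]
        congr 1
        exact Finset.sum_congr rfl fun i _ => by rw [abs_abs]
      rw [this]; exact hlam'
    have key_y := min_key hq hlam (fun i => |v i|) y hlam'' hy
    have hy0 : ∀ i, v i = 0 → y i = 0 := by
      intro i hvi
      rcases key_y i with ⟨h1, _⟩ | ⟨h1, h2⟩ | ⟨h1, h2⟩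
      · exact h1
      · simp only [hvi, abs_zero] at h2; linarith
      · simp only [hvi, abs_zero] at h1; linarith
    have gx'eq : gObjR q lam v (fun i => Real.sign (v i) * y i) =
        gObjR q lam (fun i => |v i|) y := by
      rw [gObjR, gObjR]
      congr 1
      · congr 1
        apply Finset.sum_congr rfl
        intro i _
        rcases lt_trichotomy (v i) 0 with h | h | h
        · rw [Real.sign_of_neg h, abs_of_neg h]; ring
        · rw [h, Real.sign_zero, hy0 i h]; simp
        · rw [Real.sign_of_pos h, abs_of_pos h]; ring
      · congr 1
        rw [lqNormR, lqNormR]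
        congr 1
        apply Finset.sum_congr rfl
        intro i _
        rcases lt_trichotomy (v i) 0 with h | h | h
        · rw [Real.sign_of_neg h, abs_mul]; norm_num
        · rw [h, Real.sign_zero, hy0 i h]; norm_num
        · rw [Real.sign_of_pos h, abs_mul]; norm_num
    have hs1 : ∀ t : ℝ, |Real.sign t| ≤ 1 := by
      intro t
      rcases lt_trichotomy t 0 with h | h | h
      · rw [Real.sign_of_neg h]; norm_num
      · rw [h, Real.sign_zero]; norm_num
      · rw [Real.sign_of_pos h]; norm_num
    have hle : ∀ z : Fin n → ℝ,
        gObjR q lam (fun i => |v i|) (fun i => Real.sign (v i) * z i) ≤ gObjR q lam v z := by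
      intro z
      rw [gObjR, gObjR]
      apply add_le_add
      · apply mul_le_mul_of_nonneg_left _ (by norm_num)
        apply Finset.sum_le_sum
        intro i _
        rcases lt_trichotomy (v i) 0 with h | h | h
        · rw [Real.sign_of_neg h, abs_of_neg h]
          apply le_of_eq; ring
        · rw [h, Real.sign_zero, abs_zero]
          simpa using sq_nonneg (z i)
        · rw [Real.sign_of_pos h, abs_of_pos h]
          apply le_of_eq; ring
      · apply mul_le_mul_of_nonneg_left _ hlam.le
        apply lq_mono hq0
        intro i
        rw [abs_mul]
        calc |Real.sign (v i)| * |z i| ≤ 1 * |z i| :=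
              mul_le_mul_of_nonneg_right (hs1 _) (abs_nonneg _)
          _ = |z i| := one_mul _
    have hx' : ∀ z, gObjR q lam v (fun i => Real.sign (v i) * y i) ≤ gObjR q lam v z := by
      intro z
      rw [gx'eq]
      exact (hy _).trans (hle z)
    exact g_min_unique hq hlam.le v x _ hx hx'
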